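/- Let 𝒢 be a hereditary class of simple graphs whose forbidden induced subgraphs all have at most c vertices. Then every forbidden induced subgraph for the apex class 𝒢^apex (graphs G containing a vertex v with G−v ∈ 𝒢) has at most ⌊(c+2)²/4⌋ vertices. -/

import Mathlib

open SimpleGraph

/-- A property of finite simple graphs. -/
abbrev GraphProp : Type 1 := ∀ (V : Type) [Finite V], SimpleGraph V → Prop

/-- A class of finite simple graphs: a property closed under isomorphism. -/
structure GraphClass : Type 1 where
  Mem : GraphProp
  iso_closed : ∀ (V W : Type) [Finite V] [Finite W] (G : SimpleGraph V) (H : SimpleGraph W),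
      Nonempty (G ≃g H) → Mem V G → Mem W H

/-- A property is hereditary if it is closed under taking induced subgraphs. -/
def Hereditary (P : GraphProp) : Prop :=
  ∀ (V : Type) [Finite V] (G : SimpleGraph V) (s : Set V), P V G → P s (G.induce s)

/-- `H` is a forbidden induced subgraph for `P`: it does not satisfy `P` but every
proper induced subgraph of it does. -/
def Forb (P : GraphProp) {V : Type} [Finite V] (H : SimpleGraph V) : Prop :=
  ¬ P V H ∧ ∀ s : Set V, s ≠ Set.univ → P s (H.induce s)

/-- Membership in the apex class of `𝒢`: graphs containing a vertex whose deletion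
lands in `𝒢` (together with the empty graph). -/
def ApexMem (𝒢 : GraphClass) : GraphProp :=
  fun V _ G => IsEmpty V ∨ ∃ v : V, 𝒢.Mem {u : V | u ≠ v} (G.induce {u : V | u ≠ v})

/-! ### Auxiliary material -/

/-- Induced subgraph of an induced subgraph is the induced subgraph on the image. -/
noncomputable def induceInduceIso {V : Type} (G : SimpleGraph V) (A : Set V) (t : Set A) :
    (G.induce A).induce t ≃g G.induce (Subtype.val '' t) := by
  refine ⟨Equiv.ofBijective (fun x => ⟨x.1.1, ⟨x.1, x.2, rfl⟩⟩) ⟨?_, ?_⟩, ?_⟩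
  · intro a b h
    simp only [Subtype.mk.injEq] at h
    exact Subtype.ext (Subtype.ext (by have := congrArg Subtype.val h; exact this))
  · rintro ⟨y, x, hx, rfl⟩
    exact ⟨⟨x, hx⟩, rfl⟩
  · intro a b
    rfl

lemma graphclass_mem_induce_iff (𝒢 : GraphClass) {V : Type} [Finite V] (G : SimpleGraph V)
    (A : Set V) (t : Set A) :
    𝒢.Mem t ((G.induce A).induce t) ↔
      𝒢.Mem (Subtype.val '' t) (G.induce (Subtype.val '' t)) := by
  constructor
  · intro h
    exact 𝒢.iso_closed _ _ _ _ ⟨induceInduceIso G A t⟩ h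
  · intro h
    exact 𝒢.iso_closed _ _ _ _ ⟨(induceInduceIso G A t).symm⟩ h


lemma mem_congr_set (𝒢 : GraphClass) {V : Type} [Finite V] (G : SimpleGraph V)
    {A B : Set V} (h : A = B) (hm : 𝒢.Mem A (G.induce A)) : 𝒢.Mem B (G.induce B) := by
  subst h; exact hm

lemma graphclass_mem_mono (𝒢 : GraphClass) (hher : Hereditary 𝒢.Mem) {V : Type} [Finite V]
    (G : SimpleGraph V) {s t : Set V} (hst : s ⊆ t) (h : 𝒢.Mem t (G.induce t)) :
    𝒢.Mem s (G.induce s) := by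
  have h1 := hher (↥t) (G.induce t) {x : t | (x : V) ∈ s} h
  rw [graphclass_mem_induce_iff] at h1
  have himg : Subtype.val '' {x : t | (x : V) ∈ s} = s := by
    ext u
    constructor
    · rintro ⟨x, hx, rfl⟩; exact hx
    · intro hu; exact ⟨⟨u, hst hu⟩, hu, rfl⟩
  exact mem_congr_set 𝒢 G himg h1

lemma exists_small_bad (𝒢 : GraphClass) (c : ℕ)
    (hc : ∀ (V : Type) [Finite V] (H : SimpleGraph V), Forb 𝒢.Mem H → Nat.card V ≤ c)
    {V : Type} [Fintype V] [DecidableEq V] (G : SimpleGraph V) :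
    ∀ s : Finset V, ¬ 𝒢.Mem ↑s (G.induce ↑s) →
      ∃ m : Finset V, m ⊆ s ∧ ¬ 𝒢.Mem ↑m (G.induce ↑m) ∧ m.card ≤ c := by
  classical
  intro s
  induction s using Finset.strongInduction with
  | _ s ih =>
    intro hbad
    by_cases hex : ∃ t, t ⊂ s ∧ ¬ 𝒢.Mem ↑t (G.induce ↑t)
    · obtain ⟨t, hts, hbt⟩ := hex
      obtain ⟨m, hmt, hbm, hmc⟩ := ih t hts hbt
      exact ⟨m, hmt.trans hts.subset, hbm, hmc⟩
    · push_neg at hex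
      refine ⟨s, Finset.Subset.refl s, hbad, ?_⟩
      have hforb : Forb 𝒢.Mem (G.induce (↑s : Set V)) := by
        refine ⟨hbad, ?_⟩
        intro u hu
        have hmem : 𝒢.Mem (Subtype.val '' u) (G.induce (Subtype.val '' u)) := by
          set m' : Finset V := s.filter
            (fun x => ∃ hx : x ∈ (↑s : Set V), (⟨x, hx⟩ : ↥(↑s : Set V)) ∈ u) with hm'
          have hset : (↑m' : Set V) = Subtype.val '' u := by
            ext x
            simp only [hm', Finset.coe_filter, Set.mem_setOf_eq, Set.mem_image]
            constructor
            · rintro ⟨hxs, hx, hxu⟩; exact ⟨⟨x, hx⟩, hxu, rfl⟩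
            · rintro ⟨a, hau, rfl⟩
              exact ⟨Finset.mem_coe.1 a.2, a.2, hau⟩
          have hne : m' ≠ s := by
            intro heq
            apply hu
            ext a
            simp only [Set.mem_univ, iff_true]
            have hmem2 : (↑a : V) ∈ (↑m' : Set V) := by
              rw [heq]; exact a.2
            rw [hset] at hmem2
            obtain ⟨b, hbu, hba⟩ := hmem2
            have hba' : b = a := Subtype.ext hba
            exact hba' ▸ hbu
          have hss : m' ⊂ s := (Finset.filter_subset _ _).ssubset_of_ne hne
          have hmm' := hex m' hss
          exact mem_congr_set 𝒢 G hset hmm'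
        exact (graphclass_mem_induce_iff 𝒢 G ↑s u).2 hmem
      have hcard := hc (↥(↑s : Set V)) (G.induce ↑s) hforb
      rwa [Nat.card_coe_set_eq, Set.ncard_coe_finset] at hcard

/-- Independence for a finset of vertices. -/
def IndepF {V : Type} (M : SimpleGraph V) (s : Finset V) : Prop :=
  ∀ x ∈ s, ∀ y ∈ s, ¬ M.Adj x y

lemma IndepF.subset {V : Type} {M : SimpleGraph V} {s t : Finset V} (hst : s ⊆ t)
    (ht : IndepF M t) : IndepF M s :=
  fun x hx y hy => ht x (hst hx) y (hst hy)

/-- Neighbours of `K` inside `I`. -/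
def NIF {V : Type} [DecidableEq V] (M : SimpleGraph V) [DecidableRel M.Adj]
    (I K : Finset V) : Finset V :=
  I.filter (fun u => ∃ x ∈ K, M.Adj x u)

lemma NIF_union {V : Type} [DecidableEq V] (M : SimpleGraph V) [DecidableRel M.Adj]
    (I K K' : Finset V) : NIF M I (K ∪ K') = NIF M I K ∪ NIF M I K' := by
  ext u
  simp only [NIF, Finset.mem_filter, Finset.mem_union]
  constructor
  · rintro ⟨hu, x, hx, hadj⟩
    rcases hx with h | h
    · exact Or.inl ⟨hu, x, h, hadj⟩
    · exact Or.inr ⟨hu, x, h, hadj⟩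
  · rintro (⟨hu, x, hx, hadj⟩ | ⟨hu, x, hx, hadj⟩)
    · exact ⟨hu, x, Or.inl hx, hadj⟩
    · exact ⟨hu, x, Or.inr hx, hadj⟩

lemma NIF_inter_subset {V : Type} [DecidableEq V] (M : SimpleGraph V) [DecidableRel M.Adj]
    (I K K' : Finset V) : NIF M I (K ∩ K') ⊆ NIF M I K ∩ NIF M I K' := by
  intro u hu
  simp only [NIF, Finset.mem_filter, Finset.mem_inter] at hu ⊢
  obtain ⟨hu1, x, hx, hadj⟩ := hu
  exact ⟨⟨hu1, x, hx.1, hadj⟩, ⟨hu1, x, hx.2, hadj⟩⟩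

/-- Hall-type bound coming from maximality of the independent set `I`. -/
lemma hall_bound {V : Type} [Fintype V] [DecidableEq V] (M : SimpleGraph V)
    [DecidableRel M.Adj] (I : Finset V) (hI : IndepF M I)
    (hImax : ∀ J, IndepF M J → J.card ≤ I.card)
    (K : Finset V) (hdisj : Disjoint K I) (hK : IndepF M K) :
    K.card ≤ (NIF M I K).card := by
  set N := NIF M I K with hN
  have hNI : N ⊆ I := Finset.filter_subset _ _
  have hJindep : IndepF M ((I \ N) ∪ K) := by
    intro x hx y hy hadj
    rcases Finset.mem_union.1 hx with hx' | hx' <;> rcases Finset.mem_union.1 hy with hy' | hy'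
    · exact hI x (Finset.mem_sdiff.1 hx').1 y (Finset.mem_sdiff.1 hy').1 hadj
    · exact (Finset.mem_sdiff.1 hx').2
        (Finset.mem_filter.2 ⟨(Finset.mem_sdiff.1 hx').1, ⟨y, hy', hadj.symm⟩⟩)
    · exact (Finset.mem_sdiff.1 hy').2
        (Finset.mem_filter.2 ⟨(Finset.mem_sdiff.1 hy').1, ⟨x, hx', hadj⟩⟩)
    · exact hK x hx' y hy' hadj
  have hd2 : Disjoint (I \ N) K := (hdisj.symm).mono_left Finset.sdiff_subset
  have hcard := hImax _ hJindep
  rw [Finset.card_union_of_disjoint hd2, Finset.card_sdiff_of_subset hNI] at hcard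
  have := Finset.card_le_card hNI
  omega

/-- The purely combinatorial core: if every vertex of `M` has a neighbour, and for every
vertex `v` there is a vertex cover of size `≤ c` avoiding `v`, then `|V| ≤ ⌊(c+2)²/4⌋`. -/
lemma pure_claim {V : Type} [Fintype V] [DecidableEq V] (M : SimpleGraph V)
    [DecidableRel M.Adj] (c : ℕ)
    (hiso : ∀ v : V, ∃ w, M.Adj v w)
    (hcov : ∀ v : V, ∃ B : Finset V, v ∉ B ∧ B.card ≤ c ∧
      ∀ x y, M.Adj x y → x ∈ B ∨ y ∈ B) :
    Fintype.card V ≤ (c + 2) ^ 2 / 4 := by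
  classical
  rcases isEmpty_or_nonempty V with hV | hV
  · rw [Fintype.card_eq_zero]
    exact Nat.zero_le _
  obtain ⟨I, hImem, hImax0⟩ := Finset.exists_max_image
    (Finset.univ.powerset.filter (IndepF M)) Finset.card
    ⟨∅, by simp [IndepF]⟩
  have hI : IndepF M I := (Finset.mem_filter.1 hImem).2
  have hImax : ∀ J, IndepF M J → J.card ≤ I.card := by
    intro J hJ
    exact hImax0 J (Finset.mem_filter.2 ⟨Finset.mem_powerset.2 (Finset.subset_univ J), hJ⟩)
  set n := Fintype.card V with hn
  set α := I.card with hα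
  set τ := (Finset.univ \ I).card with hτ
  have hτα : τ + α = n := by
    rw [hτ, Finset.card_sdiff_of_subset (Finset.subset_univ I), Finset.card_univ, ← hn, ← hα]
    have : α ≤ n := by rw [hα, hn, ← Finset.card_univ]; exact Finset.card_le_card (Finset.subset_univ I)
    omega
  -- Step A: independent sets through every vertex, of size ≥ n - c
  have stepA : ∀ v : V, ∃ J : Finset V, IndepF M J ∧ v ∈ J ∧ n ≤ J.card + c := by
    intro v
    obtain ⟨B, hvB, hBc, hBcov⟩ := hcov v
    refine ⟨Finset.univ \ B, ?_, ?_, ?_⟩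
    · intro x hx y hy hadj
      rcases hBcov x y hadj with h | h
      · exact (Finset.mem_sdiff.1 hx).2 h
      · exact (Finset.mem_sdiff.1 hy).2 h
    · exact Finset.mem_sdiff.2 ⟨Finset.mem_univ v, hvB⟩
    · rw [Finset.card_sdiff_of_subset (Finset.subset_univ B), Finset.card_univ, ← hn]
      have : B.card ≤ n := by rw [hn, ← Finset.card_univ]; exact Finset.card_le_card (Finset.subset_univ B)
      omega
  have hα1 : 1 ≤ α := by
    have hsing : IndepF M {hV.some} := by
      intro x hx y hy
      rw [Finset.mem_singleton] at hx hy
      subst hx; subst hy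
      exact M.loopless.irrefl _
    have := hImax _ hsing
    simpa using this
  have hnac : n ≤ α + c := by
    obtain ⟨J, hJ, _, hJc⟩ := stepA hV.some
    have := hImax J hJ
    omega
  have hτ1 : 1 ≤ τ := by
    by_contra h
    have h0 : (Finset.univ \ I) = ∅ := Finset.card_eq_zero.1 (by omega)
    have hsub : (Finset.univ : Finset V) ⊆ I := by
      rwa [Finset.sdiff_eq_empty_iff_subset] at h0
    obtain ⟨w, hw⟩ := hiso hV.some
    exact hI _ (hsub (Finset.mem_univ _)) _ (hsub (Finset.mem_univ _)) hw
  set D := (α + τ - 1) / τ with hDdef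
  have hD1 : α ≤ τ * D := by
    have h1 := Nat.div_add_mod (α + τ - 1) τ
    have h2 := Nat.mod_lt (α + τ - 1) (show 0 < τ by omega)
    rw [← hDdef] at h1
    omega
  have hD2 : τ * D ≤ α + τ - 1 := by
    rw [hDdef, Nat.mul_comm]
    exact Nat.div_mul_le_self _ _
  by_cases hDsmall : D ≤ 1
  · -- easy case : α ≤ τ
    have hατ : α ≤ τ := by
      have : τ * D ≤ τ * 1 := Nat.mul_le_mul_left _ hDsmall
      omega
    have hτc : τ ≤ c := by omega
    rw [Nat.le_div_iff_mul_le (by norm_num : 0 < 4)]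
    have h4 : (n : ℤ) ≤ 2 * c := by exact_mod_cast (by omega : n ≤ 2 * c)
    zify
    nlinarith [sq_nonneg ((c : ℤ) - 2), h4]
  push_neg at hDsmall
  by_cases hcase : ∃ w : V, ∀ J, IndepF M J → w ∈ J → J.card + D ≤ α + 1
  · -- main counting case
    obtain ⟨w, hw⟩ := hcase
    obtain ⟨J, hJ, hwJ, hJc⟩ := stepA w
    have h1 := hw J hJ hwJ
    have hτD : τ + D ≤ c + 1 := by omega
    rw [Nat.le_div_iff_mul_le (by norm_num : 0 < 4)]
    have hD1' : (α : ℤ) ≤ (τ : ℤ) * D := by exact_mod_cast hD1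
    have hτα' : (τ : ℤ) + α = n := by exact_mod_cast hτα
    have hτD' : (τ : ℤ) + D ≤ (c : ℤ) + 1 := by exact_mod_cast hτD
    have hτ0 : (0 : ℤ) ≤ τ := Int.natCast_nonneg τ
    have hD0 : (0 : ℤ) ≤ D := Int.natCast_nonneg D
    have e2 : (0 : ℤ) ≤ (τ : ℤ) + D + 1 := by linarith
    have e3 : ((τ : ℤ) + D + 1) * ((τ : ℤ) + D + 1) ≤ ((c : ℤ) + 2) * ((c : ℤ) + 2) :=
      mul_le_mul (by linarith) (by linarith) e2 (by linarith)
    zify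
    nlinarith [sq_nonneg ((τ : ℤ) - (D : ℤ) - 1), e3, hD1', hτα']
  · -- contradiction case
    exfalso
    push_neg at hcase
    have hT : ∀ w : V, ∃ T : Finset V, IndepF M T ∧ w ∈ T ∧ α + 2 ≤ T.card + D ∧
        ∀ u, u ∉ T → ∃ x ∈ T, M.Adj x u := by
      intro w
      have hsing : IndepF M {w} := by
        intro x hx y hy
        rw [Finset.mem_singleton] at hx hy
        subst hx; subst hy
        exact M.loopless.irrefl _
      obtain ⟨T, hTmem, hTmax⟩ := Finset.exists_max_image
        (Finset.univ.powerset.filter (fun s => IndepF M s ∧ w ∈ s)) Finset.card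
        ⟨{w}, Finset.mem_filter.2 ⟨Finset.mem_powerset.2 (Finset.subset_univ _),
          hsing, Finset.mem_singleton_self w⟩⟩
      obtain ⟨-, hTI, hwT⟩ := Finset.mem_filter.1 hTmem
      refine ⟨T, hTI, hwT, ?_, ?_⟩
      · obtain ⟨J, hJ, hwJ, hJD⟩ := hcase w
        have := hTmax J (Finset.mem_filter.2
          ⟨Finset.mem_powerset.2 (Finset.subset_univ J), hJ, hwJ⟩)
        omega
      · intro u hu
        by_contra hnone
        push_neg at hnone
        have hins : IndepF M (insert u T) := by
          intro x hx y hy hadj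
          rcases Finset.mem_insert.1 hx with rfl | hx' <;>
            rcases Finset.mem_insert.1 hy with rfl | hy'
          · exact M.loopless.irrefl _ hadj
          · exact hnone y hy' hadj.symm
          · exact hnone x hx' hadj
          · exact hTI x hx' y hy' hadj
        have := hTmax (insert u T) (Finset.mem_filter.2
          ⟨Finset.mem_powerset.2 (Finset.subset_univ _), hins, Finset.mem_insert_of_mem hwT⟩)
        rw [Finset.card_insert_of_notMem hu] at this
        omega
    choose T hT1 hT2 hT3 hT4 using hT
    set K : V → Finset V := fun w => T w \ I with hK
    have hKdef : ∀ w, K w = T w \ I := fun _ => rfl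
    have hKc : ∀ w, K w ⊆ Finset.univ \ I := by
      intro w x hx
      rw [hKdef] at hx
      exact Finset.mem_sdiff.2 ⟨Finset.mem_univ x, (Finset.mem_sdiff.1 hx).2⟩
    have hKmem : ∀ w, w ∈ Finset.univ \ I → w ∈ K w := by
      intro w hw
      rw [hKdef]
      exact Finset.mem_sdiff.2 ⟨hT2 w, (Finset.mem_sdiff.1 hw).2⟩
    have hKindep : ∀ w, IndepF M (K w) := by
      intro w
      rw [hKdef]
      exact IndepF.subset Finset.sdiff_subset (hT1 w)
    have hKNI : ∀ w, NIF M I (K w) = I \ T w := by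
      intro w
      rw [hKdef]
      ext u
      simp only [NIF, Finset.mem_filter, Finset.mem_sdiff]
      constructor
      · rintro ⟨huI, x, hx, hadj⟩
        refine ⟨huI, fun huT => ?_⟩
        exact hT1 w x hx.1 u huT hadj
      · rintro ⟨huI, huT⟩
        obtain ⟨x, hxT, hadj⟩ := hT4 w u huT
        have hxI : x ∉ I := fun hxI => hI x hxI u huI hadj
        exact ⟨huI, x, ⟨hxT, hxI⟩, hadj⟩
    have hKce : ∀ w, (NIF M I (K w)).card + 2 ≤ (K w).card + D := by
      intro w
      rw [hKNI w, hKdef]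
      have e1 : (I ∩ T w).card + (I \ T w).card = I.card :=
        Finset.card_inter_add_card_sdiff I (T w)
      have e2 : (T w ∩ I).card + (T w \ I).card = (T w).card :=
        Finset.card_inter_add_card_sdiff (T w) I
      have e3 : (I ∩ T w).card = (T w ∩ I).card := by rw [Finset.inter_comm]
      have := hT3 w
      omega
    have chain : ∀ S : Finset V,
        (NIF M I (S.biUnion K)).card ≤ (S.biUnion K).card + S.card * (D - 2) := by
      intro S
      induction S using Finset.induction_on with
      | empty =>
        simp [NIF]
      | insert w S hnotmem ih =>
        rw [Finset.biUnion_insert]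
        have h2 : NIF M I (K w ∪ S.biUnion K) = NIF M I (K w) ∪ NIF M I (S.biUnion K) :=
          NIF_union M I _ _
        have h3 : NIF M I (K w ∩ S.biUnion K) ⊆ NIF M I (K w) ∩ NIF M I (S.biUnion K) :=
          NIF_inter_subset M I _ _
        have h1 : (K w ∩ S.biUnion K).card ≤ (NIF M I (K w ∩ S.biUnion K)).card := by
          refine hall_bound M I hI hImax _ ?_ ?_
          · refine Finset.disjoint_left.2 fun x hx hxI => ?_
            have := hKc w (Finset.mem_inter.1 hx).1
            exact (Finset.mem_sdiff.1 this).2 hxI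
          · exact IndepF.subset Finset.inter_subset_left (hKindep w)
        have h4 := Finset.card_union_add_card_inter (NIF M I (K w)) (NIF M I (S.biUnion K))
        have h5 := Finset.card_union_add_card_inter (K w) (S.biUnion K)
        have h6 := hKce w
        have h7 := Finset.card_le_card h3
        have h8 : (insert w S).card = S.card + 1 := by
          rw [Finset.card_insert_of_notMem hnotmem]
        have h9 : (S.card + 1) * (D - 2) = S.card * (D - 2) + (D - 2) := by ring
        rw [h2, h8, h9]
        omega
    have hUC : (Finset.univ \ I).biUnion K = Finset.univ \ I := by
      apply Finset.Subset.antisymm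
      · intro x hx
        rw [Finset.mem_biUnion] at hx
        obtain ⟨w, hwC, hxK⟩ := hx
        exact hKc w hxK
      · intro w hw
        rw [Finset.mem_biUnion]
        exact ⟨w, hw, hKmem w hw⟩
    have hNIC : NIF M I (Finset.univ \ I) = I := by
      apply Finset.Subset.antisymm (Finset.filter_subset _ _)
      intro u hu
      obtain ⟨x, hadj⟩ := hiso u
      have hxI : x ∉ I := fun hxI => hI u hu x hxI hadj
      exact Finset.mem_filter.2 ⟨hu, x, Finset.mem_sdiff.2 ⟨Finset.mem_univ x, hxI⟩, hadj.symm⟩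
    have hfinal := chain (Finset.univ \ I)
    rw [hUC, hNIC, ← hτ, ← hα] at hfinal
    have hmul : τ * (D - 2) + τ * 2 = τ * D := by
      rw [← Nat.mul_add]
      congr 1
      omega
    omega

theorem apex_forbidden_bound (𝒢 : GraphClass) (hher : Hereditary 𝒢.Mem) (c : ℕ)
    (hc : ∀ (V : Type) [Finite V] (H : SimpleGraph V), Forb 𝒢.Mem H → Nat.card V ≤ c)
    (V : Type) [Finite V] (G : SimpleGraph V) (hG : Forb (ApexMem 𝒢) G) :
    Nat.card V ≤ (c + 2) ^ 2 / 4 := by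
  classical
  have hFin : Fintype V := Fintype.ofFinite V
  rw [Nat.card_eq_fintype_card]
  by_cases hsmall : Fintype.card V ≤ 1
  · refine le_trans hsmall ?_
    rw [Nat.le_div_iff_mul_le (by norm_num : 0 < 4)]
    have h22 : 2 ^ 2 ≤ (c + 2) ^ 2 := Nat.pow_le_pow_left (by omega) 2
    omega
  push_neg at hsmall
  obtain ⟨hG1, hG2⟩ := hG
  have hno : ∀ v : V, ¬ 𝒢.Mem {u : V | u ≠ v} (G.induce {u : V | u ≠ v}) :=
    fun v h => hG1 (Or.inr ⟨v, h⟩)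
  -- badness of complements of single vertices
  have hbad_erase : ∀ v : V,
      ¬ 𝒢.Mem ↑(Finset.univ.erase v) (G.induce ↑(Finset.univ.erase v)) := by
    intro v
    have hset : (↑(Finset.univ.erase v) : Set V) = {u : V | u ≠ v} := by
      ext u; simp
    intro hmem
    exact hno v (mem_congr_set 𝒢 G hset hmem)
  have hmono : ∀ s t : Finset V, s ⊆ t → ¬ 𝒢.Mem ↑s (G.induce ↑s) →
      ¬ 𝒢.Mem ↑t (G.induce ↑t) :=
    fun s t hst hbs hmt => hbs (graphclass_mem_mono 𝒢 hher G (Finset.coe_subset.2 hst) hmt)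
  -- pairs : every vertex has a "good pair" partner
  have hpair : ∀ v : V, ∃ w, w ≠ v ∧
      𝒢.Mem ↑((Finset.univ.erase v).erase w)
        (G.induce ↑((Finset.univ.erase v).erase w)) := by
    intro v
    have hsne : {u : V | u ≠ v} ≠ Set.univ := by
      intro h
      have : v ∈ {u : V | u ≠ v} := h ▸ Set.mem_univ v
      exact this rfl
    rcases hG2 {u : V | u ≠ v} hsne with hempty | ⟨w, hw⟩
    · exfalso
      obtain ⟨u, hu⟩ := Fintype.exists_ne_of_one_lt_card (by omega) v
      exact hempty.false ⟨u, hu⟩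
    · have hw' := (graphclass_mem_induce_iff 𝒢 G _ _).1 hw
      have himg : Subtype.val '' {x : ↥{u : V | u ≠ v} | x ≠ w} =
          ↑((Finset.univ.erase v).erase ↑w) := by
        ext x
        simp only [Set.mem_image, Set.mem_setOf_eq, Finset.mem_coe, Finset.mem_erase,
          Finset.mem_univ, and_true]
        constructor
        · rintro ⟨a, haw, rfl⟩
          exact ⟨fun h => haw (Subtype.ext h), a.2⟩
        · rintro ⟨hxw, hxv⟩
          exact ⟨⟨x, hxv⟩, fun h => hxw (congrArg Subtype.val h), rfl⟩
      exact ⟨↑w, w.2, mem_congr_set 𝒢 G himg hw'⟩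
  -- the auxiliary graph M on V
  let M : SimpleGraph V :=
    { Adj := fun x y => x ≠ y ∧
        𝒢.Mem ↑((Finset.univ.erase x).erase y) (G.induce ↑((Finset.univ.erase x).erase y))
      symm := by
        refine ⟨?_⟩
        intro x y ⟨hxy, hm⟩
        refine ⟨hxy.symm, ?_⟩
        rwa [Finset.erase_right_comm] at hm
      loopless := ⟨fun x h => h.1 rfl⟩ }
  have hMdec : DecidableRel M.Adj := Classical.decRel _
  have hiso : ∀ v : V, ∃ w, M.Adj v w := by
    intro v
    obtain ⟨w, hwv, hm⟩ := hpair v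
    exact ⟨w, hwv.symm, hm⟩
  have hcov : ∀ v : V, ∃ B : Finset V, v ∉ B ∧ B.card ≤ c ∧
      ∀ x y, M.Adj x y → x ∈ B ∨ y ∈ B := by
    intro v
    obtain ⟨m, hms, hbm, hmc⟩ := exists_small_bad 𝒢 c hc G (Finset.univ.erase v)
      (hbad_erase v)
    refine ⟨m, fun hvm => (Finset.mem_erase.1 (hms hvm)).1 rfl, hmc, ?_⟩
    intro x y hadj
    by_contra hcon
    push_neg at hcon
    have hsub : m ⊆ (Finset.univ.erase x).erase y := by
      intro z hz
      refine Finset.mem_erase.2 ⟨fun h => hcon.2 (h ▸ hz), Finset.mem_erase.2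
        ⟨fun h => hcon.1 (h ▸ hz), Finset.mem_univ z⟩⟩
    exact hmono m _ hsub hbm hadj.2
  exact pure_claim M c hiso hcov
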